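/- Let K be an algebraically closed field of characteristic p > 0, let n be a positive integer and let ζ = Σ_j c_j t^j ∈ K[[t]] be a nonzero power series satisfying the minimality condition with respect to n. Let M be a positive integer and let ζ_{<M} := Σ_{j<M} c_j t^j be the truncation of ζ below degree M. Let d := gcd of n together with all j < M such that c_j ≠ 0, and set m := n/d (so m is the minimal common denominator of the exponents j/n occurring in the truncated Newton–Puiseux series). Then the set { rescale_ρ ζ_{<M} : ρ ∈ U_n } has exactly m[:p] elements. -/

import Mathlib

open scoped Classical

noncomputable section

namespace PaperStmt

/-- The formal partial derivative `∂_i f` of a formal power series in two variables: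
its coefficient at a monomial `m` is `(m i + 1)` times the coefficient of `f` at
`m + eᵢ`. -/
def pderiv (K : Type*) [Field K] (i : Fin 2) (f : MvPowerSeries (Fin 2) K) :
    MvPowerSeries (Fin 2) K :=
  fun m => ((m i + 1 : ℕ) : K) * MvPowerSeries.coeff (m + Finsupp.single i 1) f

/-- The intersection number `I(f,g) := dim_K K[[X,Y]]/(f,g)`. -/
def inum (K : Type*) [Field K] (f g : MvPowerSeries (Fin 2) K) : ℕ :=
  Module.finrank K (MvPowerSeries (Fin 2) K ⧸ Ideal.span {f, g})

/-- The Milnor number `μ(f) := dim_K K[[X,Y]]/(∂_X f, ∂_Y f)`. -/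
def milnor (K : Type*) [Field K] (f : MvPowerSeries (Fin 2) K) : ℕ :=
  inum K (pderiv K 0 f) (pderiv K 1 f)

/-- `ζ ∈ K[[t]]` satisfies the minimality condition with respect to `n`: the only
positive integer dividing both `n` and every element of the support of `ζ` is `1`. -/
def MinimalDenom (K : Type*) [Field K] (n : ℕ) (ζ : PowerSeries K) : Prop :=
  ∀ d : ℕ, d ∣ n → (∀ j : ℕ, PowerSeries.coeff j ζ ≠ 0 → d ∣ j) → d = 1

/-- `b`, `e` are the characteristic data of `ζ` with respect to `n`, with `h` steps:
`e 0 = n`, `b 0 = 0`, for `j < h` the number `b (j+1)` is the least element of the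
support of `ζ` not divisible by `e j` and `e (j+1) = gcd (e j) (b (j+1))`;
the process stops exactly at `h`, i.e. `e h = 1` and `e j ≠ 1` for `j < h`. -/
def CharData (K : Type*) [Field K] (n : ℕ) (ζ : PowerSeries K) (h : ℕ)
    (b e : ℕ → ℕ) : Prop :=
  e 0 = n ∧ b 0 = 0 ∧ (∀ j, j < h → e j ≠ 1) ∧ e h = 1 ∧
  (∀ j, j < h →
    IsLeast {k : ℕ | PowerSeries.coeff k ζ ≠ 0 ∧ ¬ e j ∣ k} (b (j + 1))) ∧
  (∀ j, j < h → e (j + 1) = Nat.gcd (e j) (b (j + 1)))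

/-- `expandPS K n φ = φ(t^n)`: the image of `φ` under the (continuous) `K`-algebra
homomorphism `K[[x]] → K[[t]]` sending `x` to `t^n`. -/
def expandPS (K : Type*) [Field K] (n : ℕ) (φ : PowerSeries K) : PowerSeries K :=
  PowerSeries.mk fun j => if n ∣ j then PowerSeries.coeff (j / n) φ else 0

/-- A polynomial in `Y` with coefficients in `K[[X]]`, viewed as an element
of `K[[X,Y]]`. -/
def polyToMv (K : Type*) [Field K] (q : Polynomial (PowerSeries K)) :
    MvPowerSeries (Fin 2) K :=
  fun m => PowerSeries.coeff (m 0) (q.coeff (m 1))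

/-- `f(t^n, ζ(t)) = 0`: the series `ζ` is a root of the polynomial obtained from `f`
by mapping its coefficients through the `K`-algebra homomorphism `K[[x]] → K[[t]]`
sending `x` to `t^n`. -/
def IsNPRoot (K : Type*) [Field K] (n : ℕ) (f : Polynomial (PowerSeries K))
    (ζ : PowerSeries K) : Prop :=
  ∑ i ∈ Finset.range (f.natDegree + 1), expandPS K n (f.coeff i) * ζ ^ i = 0

/-- `nuFun K n ζ H = H(t^n, ζ(t))`: the image of `H ∈ K[[X,Y]]` under the continuous
`K`-algebra homomorphism `K[[X,Y]] → K[[t]]` sending `X ↦ t^n` and `Y ↦ ζ(t)`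
(for `1 ≤ n` and `ζ(0) = 0`). -/
def nuFun (K : Type*) [Field K] (n : ℕ) (ζ : PowerSeries K)
    (H : MvPowerSeries (Fin 2) K) : PowerSeries K :=
  PowerSeries.mk fun k =>
    ∑ a ∈ Finset.range (k + 1), ∑ c ∈ Finset.range (k + 1),
      if n * a ≤ k then
        MvPowerSeries.coeff (Finsupp.single 0 a + Finsupp.single 1 c) H *
          PowerSeries.coeff (k - n * a) (ζ ^ c)
      else 0

/-- `n[:p] = n · p^{-ν_p(n)}`, the part of `n` coprime to `p`. -/
def coprimePart (p n : ℕ) : ℕ := n / p ^ padicValNat p n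


lemma ncard_image_congr {α β γ : Type*} (U : Set α) (F : α → β) (g : α → γ)
    (h : ∀ a ∈ U, ∀ b ∈ U, (F a = F b ↔ g a = g b)) :
    (F '' U).ncard = (g '' U).ncard := by
  rcases U.eq_empty_or_nonempty with hU | ⟨a₀, ha₀⟩
  · simp [hU]
  · set φ : β → γ := fun b => if hb : ∃ a ∈ U, F a = b then g hb.choose else g a₀ with hφ
    have key : ∀ a ∈ U, φ (F a) = g a := by
      intro a ha
      have hb : ∃ a' ∈ U, F a' = F a := ⟨a, ha, rfl⟩
      rw [hφ]
      simp only [dif_pos hb]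
      exact (h _ hb.choose_spec.1 _ ha).mp hb.choose_spec.2
    have himg : φ '' (F '' U) = g '' U := by
      rw [Set.image_image]
      exact Set.image_congr key
    have hinj : Set.InjOn φ (F '' U) := by
      rintro _ ⟨a, ha, rfl⟩ _ ⟨b, hb, rfl⟩ hab
      rw [key a ha, key b hb] at hab
      exact ((h a ha b hb).mpr hab)
    rw [← himg, Set.ncard_image_of_injOn hinj]

lemma ncard_pow_eq_one (K : Type*) [Field K] [IsAlgClosed K]
    (p : ℕ) [Fact p.Prime] [CharP K p] (m : ℕ) (hm : 0 < m) :
    ({x : K | x ^ m = 1}).ncard = coprimePart p m := by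
  have hp : p.Prime := Fact.out
  set m' := coprimePart p m with hm'
  have hfac : m'= m / p ^ m.factorization p := by
    rw [hm', coprimePart, Nat.factorization_def m hp]
  have hsplit : p ^ m.factorization p * m' = m := by
    rw [hfac]; exact Nat.ordProj_mul_ordCompl_eq_self m p
  have hndvd : ¬ p ∣ m' := by
    rw [hfac]; exact Nat.not_dvd_ordCompl hp hm.ne'
  have hm'pos : 0 < m' :=
    Nat.pos_of_ne_zero (fun h0 => by rw [h0, mul_zero] at hsplit; omega)
  have hset : {x : K | x ^ m = 1} = {x : K | x ^ m' = 1} := by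
    ext x
    simp only [Set.mem_setOf_eq]
    constructor
    · intro hx
      have hx' : (x ^ m') ^ p ^ m.factorization p = 1 := by
        rw [← pow_mul, mul_comm, hsplit, hx]
      have : (x ^ m' - 1) ^ p ^ m.factorization p = 0 := by
        rw [sub_pow_char_pow, hx', one_pow, sub_self]
      exact sub_eq_zero.mp (pow_eq_zero_iff (pow_ne_zero _ hp.ne_zero) |>.mp this)
    · intro hx
      calc x ^ m = (x ^ m') ^ p ^ m.factorization p := by
            rw [← pow_mul, mul_comm, hsplit]
        _ = 1 := by rw [hx, one_pow]
  have hsep : (Polynomial.X ^ m' - Polynomial.C (1 : K)).Separable :=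
    Polynomial.separable_X_pow_sub_C' p m' 1 hndvd one_ne_zero
  have hnodup : (Polynomial.nthRoots m' (1 : K)).Nodup := by
    rw [Polynomial.nthRoots]
    exact Polynomial.nodup_roots hsep
  have hset2 : {x : K | x ^ m' = 1} = ↑(Polynomial.nthRoots m' (1 : K)).toFinset := by
    ext x
    simp [Multiset.mem_toFinset, Polynomial.mem_nthRoots hm'pos]
  have hcard : (Polynomial.nthRoots m' (1 : K)).card = m' := by
    rw [Polynomial.nthRoots]
    have hsplits : (Polynomial.X ^ m' - Polynomial.C (1 : K)).Splits :=
      IsAlgClosed.splits _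
    rw [Polynomial.splits_iff_card_roots.mp hsplits]
    exact Polynomial.natDegree_X_pow_sub_C
  rw [hset, hset2, Set.ncard_coe_finset, Multiset.toFinset_card_of_nodup hnodup, hcard]

/-- In characteristic `p > 0`, for `ζ` nonzero satisfying the
minimality condition with respect to `n`, the truncation `ζ_{<M}` of `ζ` below
degree `M` has exactly `m[:p]` distinct conjugates under rescaling by `n`-th roots
of unity, where `m = n/d` and `d` is the gcd of `n` together with all exponents
`j < M` in the support of `ζ`. -/
theorem statement16 (K : Type*) [Field K] [IsAlgClosed K]
    (p : ℕ) [Fact p.Prime] [CharP K p]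
    (n : ℕ) (hn : 0 < n)
    (ζ : PowerSeries K) (hζ : ζ ≠ 0) (hmin : MinimalDenom K n ζ)
    (M : ℕ) (hM : 0 < M)
    (d : ℕ)
    (hd : d = Nat.gcd n
      (((Finset.range M).filter fun j => PowerSeries.coeff j ζ ≠ 0).gcd id)) :
    Set.ncard
        ((fun ρ : K => PowerSeries.rescale ρ
            (PowerSeries.mk fun j => if j < M then PowerSeries.coeff j ζ else 0)) ''
          {ρ : K | ρ ^ n = 1}) =
      coprimePart p (n / d) := by
  have hp : p.Prime := Fact.out
  set S : Finset ℕ := (Finset.range M).filter fun j => PowerSeries.coeff j ζ ≠ 0 with hS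
  set τ : PowerSeries K :=
    PowerSeries.mk fun j => if j < M then PowerSeries.coeff j ζ else 0 with hτ
  have hdn : d ∣ n := hd ▸ Nat.gcd_dvd_left _ _
  have hdpos : 0 < d := hd ▸ Nat.gcd_pos_of_pos_left _ hn
  set m := n / d with hm
  have hdm : d * m = n := Nat.mul_div_cancel' hdn
  have hmpos : 0 < m := by
    rcases Nat.eq_zero_or_pos m with h0 | h; · rw [h0, mul_zero] at hdm; omega
    exact h
  have hne : ∀ ρ : K, ρ ^ n = 1 → ρ ≠ 0 := by
    intro ρ hρ h0
    rw [h0, zero_pow hn.ne'] at hρ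
    exact zero_ne_one hρ
  have key : ∀ ρ ∈ {ρ : K | ρ ^ n = 1}, ∀ σ ∈ {ρ : K | ρ ^ n = 1},
      (PowerSeries.rescale ρ τ = PowerSeries.rescale σ τ ↔ ρ ^ d = σ ^ d) := by
    intro ρ hρ σ hσ
    simp only [Set.mem_setOf_eq] at hρ hσ
    have hρ0 := hne ρ hρ
    have hσ0 := hne σ hσ
    have hcoeff : ∀ j, (PowerSeries.coeff j) τ =
        if j < M then PowerSeries.coeff j ζ else 0 := fun j => PowerSeries.coeff_mk j _
    constructor
    · intro hFF
      set u : K := ρ * σ⁻¹ with hu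
      have hun : u ^ n = 1 := by
        rw [hu, mul_pow, hρ, inv_pow, hσ, one_mul, inv_one]
      have huj : ∀ j ∈ S, u ^ j = 1 := by
        intro j hj
        rw [hS, Finset.mem_filter, Finset.mem_range] at hj
        have := congrArg (PowerSeries.coeff j) hFF
        rw [PowerSeries.coeff_rescale, PowerSeries.coeff_rescale, hcoeff,
          if_pos hj.1] at this
        have hρσ : ρ ^ j = σ ^ j := mul_right_cancel₀ hj.2 this
        rw [hu, mul_pow, hρσ, inv_pow, mul_inv_cancel₀ (pow_ne_zero _ hσ0)]
      have hord : orderOf u ∣ d := by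
        rw [hd]
        exact Nat.dvd_gcd (orderOf_dvd_of_pow_eq_one hun)
          (Finset.dvd_gcd fun j hj => orderOf_dvd_of_pow_eq_one (huj j hj))
      have hud : u ^ d = 1 := orderOf_dvd_iff_pow_eq_one.mp hord
      have : ρ ^ d * (σ ^ d)⁻¹ = 1 := by
        rw [← inv_pow, ← mul_pow]; exact hud
      field_simp at this
      exact this
    · intro hρσ
      ext j
      rw [PowerSeries.coeff_rescale, PowerSeries.coeff_rescale, hcoeff]
      by_cases hjM : j < M
      · rw [if_pos hjM]
        by_cases hc : PowerSeries.coeff j ζ = 0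
        · rw [hc, mul_zero, mul_zero]
        · have hjS : j ∈ S := by
            rw [hS, Finset.mem_filter, Finset.mem_range]; exact ⟨hjM, hc⟩
          have hgj : S.gcd id ∣ j := Finset.gcd_dvd hjS
          have hdj : d ∣ j := dvd_trans (hd ▸ Nat.gcd_dvd_right n (S.gcd id)) hgj
          obtain ⟨k, rfl⟩ := hdj
          rw [pow_mul, pow_mul, hρσ]
      · rw [if_neg hjM, mul_zero, mul_zero]
  have step1 := ncard_image_congr {ρ : K | ρ ^ n = 1}
    (fun ρ : K => PowerSeries.rescale ρ τ) (fun ρ : K => ρ ^ d) key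
  have step2 : (fun ρ : K => ρ ^ d) '' {ρ : K | ρ ^ n = 1} = {x : K | x ^ m = 1} := by
    ext x
    constructor
    · rintro ⟨ρ, hρ, rfl⟩
      simp only [Set.mem_setOf_eq] at hρ ⊢
      rw [← pow_mul, hdm, hρ]
    · intro hx
      simp only [Set.mem_setOf_eq] at hx
      obtain ⟨ρ, hρd⟩ := IsAlgClosed.exists_pow_nat_eq x hdpos
      refine ⟨ρ, ?_, hρd⟩
      simp only [Set.mem_setOf_eq]
      rw [← hdm, pow_mul, hρd, hx]
  rw [step1, step2, ncard_pow_eq_one K p m hmpos]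


end PaperStmt
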